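/- Let l ≤ k with l ≥ 1, let O_G and I_G be n×k column-incidence matrices, let O_S and I_S be n×l column-incidence matrices, and let P_{lk} be the l×k truncation matrix. Then there exists λ : Sym(n)×Sym(k) → {0,1} with Σ_{(σ,π)} λ(σ,π)·P_σ·O_G·P_π·P_{lk}ᵀ = O_S and Σ_{(σ,π)} λ(σ,π)·P_σ·I_G·P_π·P_{lk}ᵀ = I_S if and only if there exists λ : Sym(n)×Sym(k) → ℝ with λ ≥ 0 and Σ_{(σ,π)} λ(σ,π) = 1 satisfying the same two matrix equalities. -/

import Mathlib

open Matrix BigOperators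

/-- A column-incidence matrix: a 0-1 matrix with exactly one 1 in each column. -/
def IsColIncidence {n k : ℕ} (M : Matrix (Fin n) (Fin k) ℝ) : Prop :=
  (∀ i j, M i j = 0 ∨ M i j = 1) ∧ (∀ j, ∃! i, M i j = 1)

/-- The permutation matrix of a permutation `σ`. -/
def permMat {n : ℕ} (σ : Equiv.Perm (Fin n)) : Matrix (Fin n) (Fin n) ℝ :=
  Matrix.of fun i j => if σ j = i then 1 else 0

/-- The `l × k` truncation matrix `(I_l 0)`. -/
def trunc (l k : ℕ) : Matrix (Fin l) (Fin k) ℝ :=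
  Matrix.of fun i j => if (i : ℕ) = (j : ℕ) then 1 else 0

lemma entry_eq {n k l : ℕ} (hlk : l ≤ k) (A : Matrix (Fin n) (Fin k) ℝ)
    (σ : Equiv.Perm (Fin n)) (π : Equiv.Perm (Fin k)) (i : Fin n) (j : Fin l) :
    (permMat σ * A * permMat π * (trunc l k)ᵀ) i j = A (σ⁻¹ i) (π (Fin.castLE hlk j)) := by
  have h1 : permMat σ * A = Matrix.of (fun i m => A (σ⁻¹ i) m) := by
    ext i m
    simp only [Matrix.mul_apply, permMat, Matrix.of_apply, ite_mul, one_mul, zero_mul]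
    rw [Finset.sum_eq_single (σ⁻¹ i)]
    · simp
    · intro b _ hb
      rw [if_neg]
      intro h
      exact hb (by rw [← h]; simp)
    · simp
  have h2 : ∀ (B : Matrix (Fin n) (Fin k) ℝ) (i : Fin n) (m : Fin k),
      (B * permMat π) i m = B i (π m) := by
    intro B i m
    simp only [Matrix.mul_apply, permMat, Matrix.of_apply, mul_ite, mul_one, mul_zero]
    rw [Finset.sum_eq_single (π m)]
    · simp
    · intro b _ hb; rw [if_neg (by exact fun h => hb h.symm)]
    · simp
  have h3 : ∀ (B : Matrix (Fin n) (Fin k) ℝ) (i : Fin n) (j : Fin l),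
      (B * (trunc l k)ᵀ) i j = B i (Fin.castLE hlk j) := by
    intro B i j
    simp only [Matrix.mul_apply, trunc, Matrix.transpose_apply, Matrix.of_apply,
      mul_ite, mul_one, mul_zero]
    rw [Finset.sum_eq_single (Fin.castLE hlk j)]
    · simp
    · intro b _ hb
      rw [if_neg]
      intro h
      exact hb (Fin.ext h.symm)
    · simp
  rw [h3, h2, h1]
  rfl

lemma colsum {n k : ℕ} {A : Matrix (Fin n) (Fin k) ℝ} (hA : IsColIncidence A) (j : Fin k) :
    ∑ i, A i j = 1 := by
  obtain ⟨i0, hi0, hu⟩ := hA.2 j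
  rw [Finset.sum_eq_single i0]
  · exact hi0
  · intro b _ hb
    rcases hA.1 b j with h | h
    · exact h
    · exact absurd (hu b h) hb
  · simp

/-- total entry sum of a col-incidence matrix is the number of columns -/
lemma totsum {n k : ℕ} {A : Matrix (Fin n) (Fin k) ℝ} (hA : IsColIncidence A) :
    ∑ j, ∑ i, A i j = (k : ℝ) := by
  simp [colsum hA]

lemma key {ι : Type*} [Fintype ι] (lam m : ι → ℝ) (hlam : ∀ p, 0 ≤ lam p)
    (hsum : ∑ p, lam p = 1) (hm : ∀ p, m p = 0 ∨ m p = 1) (t : ℝ) (ht : t = 0 ∨ t = 1)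
    (heq : ∑ p, lam p * m p = t) (p0 : ι) (hp0 : 0 < lam p0) : m p0 = t := by
  rcases ht with ht | ht
  · subst ht
    have h := (Finset.sum_eq_zero_iff_of_nonneg (fun p _ => by
      rcases hm p with h | h <;> simp [h, hlam p])).mp heq p0 (Finset.mem_univ p0)
    rcases hm p0 with h0 | h0
    · exact h0
    · rw [h0, mul_one] at h; exact absurd h hp0.ne'
  · subst ht
    have heq2 : ∑ p, lam p * (1 - m p) = 0 := by
      have : ∑ p, lam p * (1 - m p) = ∑ p, lam p - ∑ p, lam p * m p := by
        rw [← Finset.sum_sub_distrib]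
        congr 1; ext p; ring
      rw [this, hsum, heq]; ring
    have h := (Finset.sum_eq_zero_iff_of_nonneg (fun p _ => by
      rcases hm p with h | h <;> simp [h, hlam p])).mp heq2 p0 (Finset.mem_univ p0)
    rcases hm p0 with h0 | h0
    · rw [h0, sub_zero, mul_one] at h; exact absurd h hp0.ne'
    · exact h0

theorem stmt_11 {n k l : ℕ} (hlk : l ≤ k) (hl : 1 ≤ l)
    (OG IG : Matrix (Fin n) (Fin k) ℝ) (OS IS : Matrix (Fin n) (Fin l) ℝ)
    (hOG : IsColIncidence OG) (hIG : IsColIncidence IG)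
    (hOS : IsColIncidence OS) (hIS : IsColIncidence IS) :
    (∃ lam : Equiv.Perm (Fin n) × Equiv.Perm (Fin k) → ℝ,
        (∀ p, lam p = 0 ∨ lam p = 1) ∧
        (∑ p : Equiv.Perm (Fin n) × Equiv.Perm (Fin k),
            lam p • (permMat p.1 * OG * permMat p.2 * (trunc l k)ᵀ) = OS) ∧
        (∑ p : Equiv.Perm (Fin n) × Equiv.Perm (Fin k),
            lam p • (permMat p.1 * IG * permMat p.2 * (trunc l k)ᵀ) = IS))
    ↔ (∃ lam : Equiv.Perm (Fin n) × Equiv.Perm (Fin k) → ℝ,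
        (∀ p, 0 ≤ lam p) ∧
        (∑ p : Equiv.Perm (Fin n) × Equiv.Perm (Fin k), lam p = 1) ∧
        (∑ p : Equiv.Perm (Fin n) × Equiv.Perm (Fin k),
            lam p • (permMat p.1 * OG * permMat p.2 * (trunc l k)ᵀ) = OS) ∧
        (∑ p : Equiv.Perm (Fin n) × Equiv.Perm (Fin k),
            lam p • (permMat p.1 * IG * permMat p.2 * (trunc l k)ᵀ) = IS)) := by
  -- per-column sum of each summand matrix is 1
  have hcol : ∀ (A : Matrix (Fin n) (Fin k) ℝ), IsColIncidence A →
      ∀ (p : Equiv.Perm (Fin n) × Equiv.Perm (Fin k)) (j : Fin l),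
      ∑ i, (permMat p.1 * A * permMat p.2 * (trunc l k)ᵀ) i j = 1 := by
    intro A hA p j
    have : ∀ i, (permMat p.1 * A * permMat p.2 * (trunc l k)ᵀ) i j
        = A (p.1⁻¹ i) (p.2 (Fin.castLE hlk j)) := fun i => entry_eq hlk A p.1 p.2 i j
    rw [Finset.sum_congr rfl (fun i _ => this i)]
    rw [Equiv.sum_comp (p.1⁻¹ : Equiv.Perm (Fin n)) (fun i => A i (p.2 (Fin.castLE hlk j)))]
    exact colsum hA _
  constructor
  · rintro ⟨lam, h01, hO, hI⟩
    refine ⟨lam, fun p => by rcases h01 p with h | h <;> simp [h], ?_, hO, hI⟩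
    -- sum over all entries of hO
    have htot : ∑ j, ∑ i, OS i j = (l : ℝ) := totsum hOS
    have h := congrArg (fun M : Matrix (Fin n) (Fin l) ℝ => ∑ j, ∑ i, M i j) hO
    have hlhs : (∑ j, ∑ i, (∑ p : Equiv.Perm (Fin n) × Equiv.Perm (Fin k),
        lam p • (permMat p.1 * OG * permMat p.2 * (trunc l k)ᵀ)) i j)
        = (∑ p : Equiv.Perm (Fin n) × Equiv.Perm (Fin k), lam p) * l := by
      have : ∀ (j : Fin l) (i : Fin n), (∑ p : Equiv.Perm (Fin n) × Equiv.Perm (Fin k),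
          lam p • (permMat p.1 * OG * permMat p.2 * (trunc l k)ᵀ)) i j
          = ∑ p : Equiv.Perm (Fin n) × Equiv.Perm (Fin k),
              lam p * (permMat p.1 * OG * permMat p.2 * (trunc l k)ᵀ) i j := by
        intro j i
        simp [Matrix.sum_apply, Matrix.smul_apply]
      calc ∑ j, ∑ i, (∑ p : Equiv.Perm (Fin n) × Equiv.Perm (Fin k),
              lam p • (permMat p.1 * OG * permMat p.2 * (trunc l k)ᵀ)) i j
          = ∑ j, ∑ i, ∑ p : Equiv.Perm (Fin n) × Equiv.Perm (Fin k),
              lam p * (permMat p.1 * OG * permMat p.2 * (trunc l k)ᵀ) i j := by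
            exact Finset.sum_congr rfl fun j _ => Finset.sum_congr rfl fun i _ => this j i
        _ = ∑ j, ∑ p : Equiv.Perm (Fin n) × Equiv.Perm (Fin k), ∑ i,
              lam p * (permMat p.1 * OG * permMat p.2 * (trunc l k)ᵀ) i j :=
            Finset.sum_congr rfl fun j _ => Finset.sum_comm
        _ = ∑ p : Equiv.Perm (Fin n) × Equiv.Perm (Fin k), ∑ j, ∑ i,
              lam p * (permMat p.1 * OG * permMat p.2 * (trunc l k)ᵀ) i j :=
            Finset.sum_comm
        _ = ∑ p : Equiv.Perm (Fin n) × Equiv.Perm (Fin k), lam p * l := by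
            refine Finset.sum_congr rfl fun p _ => ?_
            simp only [← Finset.mul_sum]
            congr 1
            rw [Finset.sum_congr rfl fun j (_ : j ∈ Finset.univ) => hcol OG hOG p j]
            simp
        _ = (∑ p : Equiv.Perm (Fin n) × Equiv.Perm (Fin k), lam p) * l := by
            rw [Finset.sum_mul]
    rw [hlhs, htot] at h
    have hl' : (l : ℝ) ≠ 0 := by positivity
    field_simp at h
    exact h
  · rintro ⟨lam, hnn, hsum, hO, hI⟩
    -- pick p0 in the support
    have : ∃ p0, 0 < lam p0 := by
      by_contra hc
      push_neg at hc
      have : ∀ p ∈ Finset.univ, lam p = 0 := fun p _ => le_antisymm (hc p) (hnn p)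
      rw [Finset.sum_congr rfl this] at hsum
      simp at hsum
    obtain ⟨p0, hp0⟩ := this
    have hmat : ∀ (A : Matrix (Fin n) (Fin k) ℝ) (S : Matrix (Fin n) (Fin l) ℝ),
        IsColIncidence A → IsColIncidence S →
        (∑ p : Equiv.Perm (Fin n) × Equiv.Perm (Fin k),
            lam p • (permMat p.1 * A * permMat p.2 * (trunc l k)ᵀ) = S) →
        permMat p0.1 * A * permMat p0.2 * (trunc l k)ᵀ = S := by
      intro A S hA hS heq
      ext i j
      have hentry : ∑ p : Equiv.Perm (Fin n) × Equiv.Perm (Fin k),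
          lam p * (permMat p.1 * A * permMat p.2 * (trunc l k)ᵀ) i j = S i j := by
        have := congrArg (fun M : Matrix (Fin n) (Fin l) ℝ => M i j) heq
        simpa [Matrix.sum_apply, Matrix.smul_apply] using this
      exact key lam _ hnn hsum
        (fun p => by rw [entry_eq hlk A p.1 p.2 i j]; exact hA.1 _ _)
        (S i j) (hS.1 i j) hentry p0 hp0
    refine ⟨fun p => if p = p0 then 1 else 0, fun p => by by_cases h : p = p0 <;> simp [h],
      ?_, ?_⟩
    · have hsum1 : ∀ (A : Matrix (Fin n) (Fin k) ℝ),
          ∑ p : Equiv.Perm (Fin n) × Equiv.Perm (Fin k),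
            (if p = p0 then (1:ℝ) else 0) • (permMat p.1 * A * permMat p.2 * (trunc l k)ᵀ)
          = permMat p0.1 * A * permMat p0.2 * (trunc l k)ᵀ := by
        intro A
        rw [Finset.sum_eq_single p0]
        · simp
        · intro b _ hb; simp [hb]
        · simp
      rw [hsum1]
      exact hmat OG OS hOG hOS hO
    · have hsum1 : ∀ (A : Matrix (Fin n) (Fin k) ℝ),
          ∑ p : Equiv.Perm (Fin n) × Equiv.Perm (Fin k),
            (if p = p0 then (1:ℝ) else 0) • (permMat p.1 * A * permMat p.2 * (trunc l k)ᵀ)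
          = permMat p0.1 * A * permMat p0.2 * (trunc l k)ᵀ := by
        intro A
        rw [Finset.sum_eq_single p0]
        · simp
        · intro b _ hb; simp [hb]
        · simp
      rw [hsum1]
      exact hmat IG IS hIG hIS hI
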